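/- For real x and natural numbers m, k with 1 ≤ m ≤ k, if x = 2cos(π/n) for some n, then the diagonal product formula holds: S(m-1,x)·S(k-1,x) = Σ_{j=0}^{m-1} S(k+m-2(j+1), x), where indices are interpreted via S(-1,x)=0. Equivalently, for all real x: S(m-1,x)·S(k-1,x) = Σ_{j=0}^{m-1} S(k-m+2j, x). -/

import Mathlib

/-- Chebyshev S-polynomials: S(0,x)=1, S(1,x)=x, S(m,x)=x*S(m-1,x)-S(m-2,x). -/
noncomputable def S : ℕ → ℝ → ℝ
  | 0, _ => 1
  | 1, x => x
  | (n+2), x => x * S (n+1) x - S n x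

lemma S_step (a d : ℕ) (x : ℝ) :
    S (a+1) x * S (a+1+d) x = S a x * S (a+d+2) x + S d x := by
  induction a generalizing d with
  | zero =>
    have g : S (d+2) x = x * S (d+1) x - S d x := rfl
    rw [show 0+1 = 1 from rfl, show 0+1+d = d+1 from by omega,
        show 0+d+2 = d+2 from by omega, g]
    simp only [S]
    ring
  | succ a ih =>
    have hd := ih d
    rw [show a+1+d = a+d+1 from by omega] at hd
    have g1 : S (a+1+1) x = x * S (a+1) x - S a x := rfl
    have g2 : S (a+d+2) x = x * S (a+d+1) x - S (a+d) x := rfl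
    have g3 : S (a+d+3) x = x * S (a+d+2) x - S (a+d+1) x := rfl
    rw [show a+1+1+d = a+d+2 from by omega, show a+1+d+2 = a+d+3 from by omega,
        g1, g3, g2]
    rw [g2] at hd
    linear_combination hd

lemma S_prod (a : ℕ) (x : ℝ) :
    ∀ d, S a x * S (a+d) x = ∑ j ∈ Finset.range (a+1), S (d + 2*j) x := by
  induction a with
  | zero => intro d; simp [S]
  | succ a ih =>
    intro d
    rw [S_step a d x, show a+d+2 = a+(d+2) from by omega, ih (d+2),
        Finset.sum_range_succ' (fun j => S (d + 2*j) x) (a+1)]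
    simp only [mul_zero, add_zero]
    congr 1
    apply Finset.sum_congr rfl
    intro j _
    congr 1
    ring

/-- Steinbach's diagonal product formula:
S(m-1,x)·S(k-1,x) = Σ_{j=0}^{m-1} S(k-m+2j, x) for 1 ≤ m ≤ k and all real x. -/
theorem diagonal_product_formula (m k : ℕ) (hm : 1 ≤ m) (hmk : m ≤ k) (x : ℝ) :
    S (m - 1) x * S (k - 1) x = ∑ j ∈ Finset.range m, S (k - m + 2 * j) x := by
  obtain ⟨a, rfl⟩ : ∃ a, m = a + 1 := ⟨m - 1, (Nat.succ_pred_eq_of_pos hm).symm⟩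
  obtain ⟨d, rfl⟩ : ∃ d, k = a + 1 + d := ⟨k - (a+1), (Nat.add_sub_cancel' hmk).symm⟩
  have h1 : a + 1 - 1 = a := rfl
  have h2 : a + 1 + d - 1 = a + d := by omega
  have h3 : a + 1 + d - (a + 1) = d := by omega
  rw [h1, h2, h3]
  exact S_prod a x d
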